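/- For the Bernoulli(p)-mixture scalar source X ~ (1−p)δ₀ + p·Uniform[0,1), the entropy of the b-level quantization satisfies H(⟨X⟩_b) = H₂(q_b) + q_b·log b + o(log b) terms such that lim_{b→∞} H(⟨X⟩_b)/log b = p, where the quantized variable equals 0 with probability (1−p) + p/b. -/

import Mathlib

open Filter MeasureTheory

/-- The law of the Bernoulli(p)-mixture source `X ~ (1−p)·δ₀ + p·Uniform[0,1)`. -/
noncomputable def mixLaw (p : ℝ) : Measure ℝ :=
  ENNReal.ofReal (1 - p) • Measure.dirac 0 +
    ENNReal.ofReal p • volume.restrict (Set.Ico (0 : ℝ) 1)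

/-- Shannon entropy (in bits) of the `b`-level quantization `⟨X⟩_b = ⌊bX⌋/b`
of the mixture source. -/
noncomputable def mixQuantEnt (p : ℝ) (b : ℕ) : ℝ :=
  ∑ j ∈ Finset.range b,
    -((mixLaw p) {x | ⌊(b : ℝ) * x⌋ = (j : ℤ)}).toReal *
      Real.logb 2 (((mixLaw p) {x | ⌊(b : ℝ) * x⌋ = (j : ℤ)}).toReal)

lemma quantSet (b : ℕ) (hb : (0:ℝ) < b) (j : ℤ) :
    {x : ℝ | ⌊(b:ℝ) * x⌋ = j} = Set.Ico ((j:ℝ)/b) (((j:ℝ)+1)/b) := by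
  ext x
  simp only [Set.mem_setOf_eq, Set.mem_Ico, Int.floor_eq_iff, div_le_iff₀ hb, lt_div_iff₀ hb,
    mul_comm (b:ℝ) x]

lemma mixLaw_apply (p : ℝ) (hp0 : 0 < p) (hp1 : p ≤ 1) (b : ℕ) (hb : 0 < b) (j : ℕ)
    (hj : j < b) :
    ((mixLaw p) {x | ⌊(b : ℝ) * x⌋ = (j : ℤ)}).toReal
      = (if j = 0 then 1 - p else 0) + p / b := by
  have hb' : (0:ℝ) < b := Nat.cast_pos.mpr hb
  have hb1 : (1:ℝ) ≤ b := by exact_mod_cast hb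
  rw [quantSet b hb' j]
  have hjcast : ((j:ℤ):ℝ) = (j:ℝ) := by push_cast; ring
  rw [hjcast]
  have hinter : Set.Ico ((j:ℝ)/b) (((j:ℝ)+1)/b) ∩ Set.Ico 0 1
      = Set.Ico ((j:ℝ)/b) (((j:ℝ)+1)/b) := by
    rw [Set.inter_eq_left]
    apply Set.Ico_subset_Ico
    · positivity
    · rw [div_le_one hb']
      have : (j:ℝ) + 1 ≤ b := by exact_mod_cast hj
      linarith
  have hvol : volume (Set.Ico ((j:ℝ)/b) (((j:ℝ)+1)/b)) = ENNReal.ofReal (1/b) := by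
    rw [Real.volume_Ico]
    congr 1
    field_simp
    ring
  unfold mixLaw
  rw [Measure.add_apply, Measure.smul_apply, Measure.smul_apply, Measure.dirac_apply,
    Measure.restrict_apply measurableSet_Ico, hinter, hvol, smul_eq_mul, smul_eq_mul]
  rcases eq_or_ne j 0 with rfl | hj0
  · have hmem : (0:ℝ) ∈ Set.Ico (((0:ℕ):ℝ)/(b:ℝ)) ((((0:ℕ):ℝ)+1)/(b:ℝ)) := by
      constructor
      · simp
      · positivity
    rw [Set.indicator_of_mem hmem]
    simp only [Pi.one_apply, mul_one]
    rw [← ENNReal.ofReal_mul hp0.le, ← ENNReal.ofReal_add (by linarith) (by positivity),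
      ENNReal.toReal_ofReal (by nlinarith [mul_pos hp0 (one_div_pos.mpr hb')])]
    simp
    ring
  · have hj1 : (1:ℝ) ≤ (j:ℝ) := by exact_mod_cast Nat.one_le_iff_ne_zero.mpr hj0
    have hnotmem : (0:ℝ) ∉ Set.Ico ((j:ℝ)/(b:ℝ)) (((j:ℝ)+1)/(b:ℝ)) := by
      intro h
      have h1 := h.1
      have : (0:ℝ) < (j:ℝ)/b := by positivity
      linarith
    rw [Set.indicator_of_notMem hnotmem, mul_zero, zero_add]
    rw [← ENNReal.ofReal_mul hp0.le, ENNReal.toReal_ofReal (by positivity)]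
    simp [hj0]
    ring

lemma ent_eq (p : ℝ) (hp0 : 0 < p) (hp1 : p ≤ 1) (b : ℕ) (hb : 0 < b) :
    mixQuantEnt p b
      = -((1 - p + p/(b:ℝ)) * Real.logb 2 (1 - p + p/(b:ℝ)))
        + ((b:ℝ) - 1) * (-(p/(b:ℝ)) * Real.logb 2 (p/(b:ℝ))) := by
  obtain ⟨n, rfl⟩ : ∃ n, b = n + 1 := ⟨b - 1, (Nat.succ_pred_eq_of_pos hb).symm⟩
  unfold mixQuantEnt
  rw [Finset.sum_range_succ']
  have h0 : ((mixLaw p) {x | ⌊((n+1:ℕ):ℝ) * x⌋ = ((0:ℕ):ℤ)}).toReal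
      = 1 - p + p / ((n+1:ℕ):ℝ) := by
    rw [mixLaw_apply p hp0 hp1 (n+1) hb 0 hb, if_pos rfl]
  have hs : ∀ i ∈ Finset.range n,
      -((mixLaw p) {x | ⌊((n+1:ℕ):ℝ) * x⌋ = ((i+1:ℕ):ℤ)}).toReal *
        Real.logb 2 (((mixLaw p) {x | ⌊((n+1:ℕ):ℝ) * x⌋ = ((i+1:ℕ):ℤ)}).toReal)
      = -(p/((n+1:ℕ):ℝ)) * Real.logb 2 (p/((n+1:ℕ):ℝ)) := by
    intro i hi
    have hi' := Finset.mem_range.mp hi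
    rw [mixLaw_apply p hp0 hp1 (n+1) hb (i+1) (by omega), if_neg (by omega), zero_add]
  rw [Finset.sum_congr rfl hs, Finset.sum_const, Finset.card_range, nsmul_eq_mul, h0]
  push_cast
  ring

lemma neg_mul_log_le_one {x : ℝ} (hx : 0 < x) (hx1 : x ≤ 1) : -(x * Real.log x) ≤ 1 := by
  have h1 : Real.log x⁻¹ ≤ x⁻¹ - 1 := Real.log_le_sub_one_of_pos (inv_pos.mpr hx)
  rw [Real.log_inv] at h1
  have h2 : x * x⁻¹ = 1 := mul_inv_cancel₀ hx.ne'
  nlinarith [mul_le_mul_of_nonneg_left h1 hx.le]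

theorem stmt_16 (p : ℝ) (hp0 : 0 < p) (hp1 : p ≤ 1) :
    (∀ b : ℕ, 0 < b →
        ((mixLaw p) {x | ⌊(b : ℝ) * x⌋ = (0 : ℤ)}).toReal = 1 - p + p / b ∧
        ∀ j : ℕ, 1 ≤ j → j < b →
          ((mixLaw p) {x | ⌊(b : ℝ) * x⌋ = (j : ℤ)}).toReal = p / b) ∧
      Tendsto (fun b : ℕ => mixQuantEnt p b / Real.logb 2 b) atTop (nhds p) := by
  constructor
  · intro b hb
    refine ⟨?_, fun j hj1 hj2 => ?_⟩
    · have h := mixLaw_apply p hp0 hp1 b hb 0 hb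
      rw [if_pos rfl] at h
      simpa using h
    · have h := mixLaw_apply p hp0 hp1 b hb j hj2
      rw [if_neg (by omega), zero_add] at h
      exact h
  · have h2pos : (0:ℝ) < Real.log 2 := Real.log_pos (by norm_num)
    have hlogT : Tendsto (fun b : ℕ => Real.log b) atTop atTop :=
      Real.tendsto_log_atTop.comp tendsto_natCast_atTop_atTop
    have hinv : Tendsto (fun b : ℕ => (Real.log b)⁻¹) atTop (nhds 0) :=
      hlogT.inv_tendsto_atTop
    have hqfacts : ∀ b : ℕ, 1 ≤ b →
        0 < 1 - p + p/(b:ℝ) ∧ 1 - p + p/(b:ℝ) ≤ 1 := by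
      intro b hb
      have hb1 : (1:ℝ) ≤ b := by exact_mod_cast hb
      have hb' : (0:ℝ) < b := by linarith
      have h1 : 0 < p/(b:ℝ) := div_pos hp0 hb'
      have h2 : p/(b:ℝ) ≤ p := div_le_self hp0.le hb1
      exact ⟨by linarith, by linarith⟩
    have hA : Tendsto
        (fun b : ℕ => (-((1 - p + p/(b:ℝ)) * Real.log (1 - p + p/(b:ℝ)))) / Real.log b)
        atTop (nhds 0) := by
      apply squeeze_zero' (g := fun b : ℕ => (Real.log b)⁻¹)
      · filter_upwards [eventually_ge_atTop 3] with b hb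
        obtain ⟨hq0, hq1⟩ := hqfacts b (by omega)
        have hb1 : (1:ℝ) < b := by exact_mod_cast (by omega : 1 < b)
        have hlb : 0 < Real.log b := Real.log_pos hb1
        have hlq : Real.log (1 - p + p/(b:ℝ)) ≤ 0 := Real.log_nonpos hq0.le hq1
        apply div_nonneg _ hlb.le
        nlinarith
      · filter_upwards [eventually_ge_atTop 3] with b hb
        obtain ⟨hq0, hq1⟩ := hqfacts b (by omega)
        have hb1 : (1:ℝ) < b := by exact_mod_cast (by omega : 1 < b)
        have hlb : 0 < Real.log b := Real.log_pos hb1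
        rw [← one_div (Real.log b)]
        have hnum := neg_mul_log_le_one hq0 hq1
        gcongr
      · exact hinv
    have hB : Tendsto
        (fun b : ℕ => (((b:ℝ) - 1)/(b:ℝ)) * p * (1 - Real.log p / Real.log b))
        atTop (nhds p) := by
      have t1 : Tendsto (fun b : ℕ => ((b:ℝ) - 1)/(b:ℝ)) atTop (nhds 1) := by
        have t : Tendsto (fun b : ℕ => 1 - ((b:ℝ))⁻¹) atTop (nhds (1 - 0)) :=
          tendsto_const_nhds.sub (tendsto_inv_atTop_zero.comp tendsto_natCast_atTop_atTop)
        rw [sub_zero] at t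
        apply t.congr'
        filter_upwards [eventually_ge_atTop 1] with b hb
        have hb' : (b:ℝ) ≠ 0 := by
          have : (1:ℝ) ≤ b := by exact_mod_cast hb
          linarith
        field_simp
      have t2 : Tendsto (fun b : ℕ => 1 - Real.log p / Real.log b) atTop (nhds 1) := by
        have t : Tendsto (fun b : ℕ => 1 - Real.log p * (Real.log b)⁻¹) atTop
            (nhds (1 - Real.log p * 0)) := tendsto_const_nhds.sub (tendsto_const_nhds.mul hinv)
        simpa [div_eq_mul_inv] using t
      have t3 := (t1.mul (tendsto_const_nhds (x := p))).mul t2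
      simpa using t3
    have hAB := hA.add hB
    rw [zero_add] at hAB
    apply hAB.congr'
    filter_upwards [eventually_ge_atTop 2] with b hb
    have hbpos : 0 < b := by omega
    have hb1 : (1:ℝ) < b := by exact_mod_cast (by omega : 1 < b)
    have hbne : (b:ℝ) ≠ 0 := by linarith
    have hlb : 0 < Real.log b := Real.log_pos hb1
    rw [ent_eq p hp0 hp1 b hbpos, Real.logb, Real.logb, Real.logb,
      Real.log_div hp0.ne' hbne]
    field_simp
    ring
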